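/- Let $p \in (2,4]$. For all reals $u \ge 0$ and $r$ with $u + r \ge 0$: $(u+r)^p \le u^p + p u^{p-1} r + \tfrac{p}{2}(p-1) u^{p-2} r^2 + \sum_{2 < k < p,\ k \in \mathbb{N}} \tfrac{\Gamma(p+1)}{\Gamma(k+1)\Gamma(p-k+1)} u^{p-k} |r|^k + |r|^p$. -/

import Mathlib

open scoped Classical

section Aux
open Real


lemma my_rpow_subadd {x y s : ℝ} (hx : 0 ≤ x) (hy : 0 ≤ y) (hs0 : 0 ≤ s) (hs1 : s ≤ 1) :
    (x + y) ^ s ≤ x ^ s + y ^ s := by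
  have h := NNReal.rpow_add_le_add_rpow x.toNNReal y.toNNReal hs0 hs1
  have h2 := NNReal.coe_le_coe.2 h
  push_cast at h2
  rwa [Real.coe_toNNReal x hx, Real.coe_toNNReal y hy] at h2

lemma lemA {q : ℝ} (hq1 : 1 < q) (hq2 : q ≤ 2) {a : ℝ} (ha : 0 ≤ a) :
    ∀ b : ℝ, 0 ≤ b → (a + b) ^ q ≤ a ^ q + q * a ^ (q - 1) * b + b ^ q := by
  have hq0 : (0:ℝ) ≤ q := by linarith
  set g : ℝ → ℝ := fun b => a ^ q + q * a ^ (q - 1) * b + b ^ q - (a + b) ^ q with hg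
  have hderiv : ∀ x ∈ interior (Set.Ici (0:ℝ)),
      HasDerivAt g (q * a ^ (q-1) + q * x ^ (q-1) - q * (a+x) ^ (q-1)) x := by
    intro x hx
    rw [interior_Ici] at hx
    have hx0 : (0:ℝ) < x := hx
    have h1 : HasDerivAt (fun b : ℝ => b ^ q) (q * x ^ (q-1)) x :=
      Real.hasDerivAt_rpow_const (Or.inl hx0.ne')
    have h2 : HasDerivAt (fun b : ℝ => (a + b) ^ q) (1 * q * (a+x) ^ (q-1)) x :=
      ((hasDerivAt_id x).const_add a).rpow_const (Or.inl (by positivity))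
    have h3 : HasDerivAt (fun b : ℝ => a ^ q + q * a ^ (q-1) * b) (q * a ^ (q-1) * 1) x :=
      ((hasDerivAt_id x).const_mul (q * a ^ (q-1))).const_add (a ^ q)
    have := (h3.add h1).sub h2
    exact this.congr_deriv (by ring)
  have hcont : ContinuousOn g (Set.Ici 0) := by
    apply Continuous.continuousOn
    exact ((continuous_const.add (continuous_const.mul continuous_id)).add
      (continuous_id.rpow_const fun x => Or.inr hq0)).sub
      ((continuous_const.add continuous_id).rpow_const fun x => Or.inr hq0)
  have hmono : MonotoneOn g (Set.Ici 0) := by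
    apply monotoneOn_of_deriv_nonneg (convex_Ici 0) hcont
    · exact fun x hx => ((hderiv x hx).differentiableAt).differentiableWithinAt
    · intro x hx
      rw [(hderiv x hx).deriv]
      rw [interior_Ici] at hx
      have hsub : (a + x) ^ (q-1) ≤ a ^ (q-1) + x ^ (q-1) :=
        my_rpow_subadd ha hx.le (by linarith) (by linarith)
      nlinarith [hsub]
  intro b hb
  have h0 : g 0 = 0 := by simp [hg, Real.zero_rpow (by positivity : q ≠ 0)]
  have := hmono (Set.self_mem_Ici) (Set.mem_Ici.2 hb) hb
  rw [h0] at this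
  simp only [hg] at this
  linarith

lemma lemB {p : ℝ} (hp1 : 2 < p) (hp2 : p ≤ 3) {a : ℝ} (ha : 0 ≤ a) :
    ∀ b : ℝ, 0 ≤ b → (a + b) ^ p ≤ a ^ p + p * a ^ (p - 1) * b
      + p * (p - 1) / 2 * a ^ (p - 2) * b ^ 2 + b ^ p := by
  have hp0 : (0:ℝ) ≤ p := by linarith
  set g : ℝ → ℝ := fun b => a ^ p + p * a ^ (p - 1) * b
      + p * (p - 1) / 2 * a ^ (p - 2) * b ^ 2 + b ^ p - (a + b) ^ p with hg
  have hderiv : ∀ x ∈ interior (Set.Ici (0:ℝ)),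
      HasDerivAt g (p * a ^ (p-1) + p * (p-1) * a ^ (p-2) * x
        + p * x ^ (p-1) - p * (a+x) ^ (p-1)) x := by
    intro x hx
    rw [interior_Ici] at hx
    have hx0 : (0:ℝ) < x := hx
    have h1 : HasDerivAt (fun b : ℝ => b ^ p) (p * x ^ (p-1)) x :=
      Real.hasDerivAt_rpow_const (Or.inl hx0.ne')
    have h2 : HasDerivAt (fun b : ℝ => (a + b) ^ p) (1 * p * (a+x) ^ (p-1)) x :=
      ((hasDerivAt_id x).const_add a).rpow_const (Or.inl (by positivity))
    have h3 : HasDerivAt (fun b : ℝ => a ^ p + p * a ^ (p-1) * b) (p * a ^ (p-1) * 1) x :=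
      ((hasDerivAt_id x).const_mul (p * a ^ (p-1))).const_add (a ^ p)
    have h4 : HasDerivAt (fun b : ℝ => p * (p-1) / 2 * a ^ (p-2) * b ^ 2)
        (p * (p-1) / 2 * a ^ (p-2) * (2 * x ^ 1)) x := by
      exact (hasDerivAt_pow 2 x).const_mul _
    have := ((h3.add h4).add h1).sub h2
    exact this.congr_deriv (by ring)
  have hcont : ContinuousOn g (Set.Ici 0) := by
    apply Continuous.continuousOn
    exact (((continuous_const.add (continuous_const.mul continuous_id)).add
      (continuous_const.mul (continuous_pow 2))).add
      (continuous_id.rpow_const fun x => Or.inr hp0)).sub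
      ((continuous_const.add continuous_id).rpow_const fun x => Or.inr hp0)
  have hmono : MonotoneOn g (Set.Ici 0) := by
    apply monotoneOn_of_deriv_nonneg (convex_Ici 0) hcont
    · exact fun x hx => ((hderiv x hx).differentiableAt).differentiableWithinAt
    · intro x hx
      rw [(hderiv x hx).deriv]
      rw [interior_Ici] at hx
      have hA := lemA (q := p - 1) (by linarith) (by linarith) ha x hx.le
      have he : p - 1 - 1 = p - 2 := by ring
      rw [he] at hA
      nlinarith [hA]
  intro b hb
  have h0 : g 0 = 0 := by simp [hg, Real.zero_rpow (by positivity : p ≠ 0)]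
  have := hmono (Set.self_mem_Ici) (Set.mem_Ici.2 hb) hb
  rw [h0] at this
  simp only [hg] at this
  linarith

lemma lemC {p : ℝ} (hp1 : 3 < p) (hp2 : p ≤ 4) {a : ℝ} (ha : 0 ≤ a) :
    ∀ b : ℝ, 0 ≤ b → (a + b) ^ p ≤ a ^ p + p * a ^ (p - 1) * b
      + p * (p - 1) / 2 * a ^ (p - 2) * b ^ 2
      + p * (p - 1) * (p - 2) / 6 * a ^ (p - 3) * b ^ 3 + b ^ p := by
  have hp0 : (0:ℝ) ≤ p := by linarith
  set g : ℝ → ℝ := fun b => a ^ p + p * a ^ (p - 1) * b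
      + p * (p - 1) / 2 * a ^ (p - 2) * b ^ 2
      + p * (p - 1) * (p - 2) / 6 * a ^ (p - 3) * b ^ 3 + b ^ p - (a + b) ^ p with hg
  have hderiv : ∀ x ∈ interior (Set.Ici (0:ℝ)),
      HasDerivAt g (p * a ^ (p-1) + p * (p-1) * a ^ (p-2) * x
        + p * (p-1) * (p-2) / 2 * a ^ (p-3) * x ^ 2
        + p * x ^ (p-1) - p * (a+x) ^ (p-1)) x := by
    intro x hx
    rw [interior_Ici] at hx
    have hx0 : (0:ℝ) < x := hx
    have h1 : HasDerivAt (fun b : ℝ => b ^ p) (p * x ^ (p-1)) x :=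
      Real.hasDerivAt_rpow_const (Or.inl hx0.ne')
    have h2 : HasDerivAt (fun b : ℝ => (a + b) ^ p) (1 * p * (a+x) ^ (p-1)) x :=
      ((hasDerivAt_id x).const_add a).rpow_const (Or.inl (by positivity))
    have h3 : HasDerivAt (fun b : ℝ => a ^ p + p * a ^ (p-1) * b) (p * a ^ (p-1) * 1) x :=
      ((hasDerivAt_id x).const_mul (p * a ^ (p-1))).const_add (a ^ p)
    have h4 : HasDerivAt (fun b : ℝ => p * (p-1) / 2 * a ^ (p-2) * b ^ 2)
        (p * (p-1) / 2 * a ^ (p-2) * (2 * x ^ 1)) x :=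
      (hasDerivAt_pow 2 x).const_mul _
    have h5 : HasDerivAt (fun b : ℝ => p * (p-1) * (p-2) / 6 * a ^ (p-3) * b ^ 3)
        (p * (p-1) * (p-2) / 6 * a ^ (p-3) * (3 * x ^ 2)) x :=
      (hasDerivAt_pow 3 x).const_mul _
    have := (((h3.add h4).add h5).add h1).sub h2
    exact this.congr_deriv (by ring)
  have hcont : ContinuousOn g (Set.Ici 0) := by
    apply Continuous.continuousOn
    exact ((((continuous_const.add (continuous_const.mul continuous_id)).add
      (continuous_const.mul (continuous_pow 2))).add
      (continuous_const.mul (continuous_pow 3))).add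
      (continuous_id.rpow_const fun x => Or.inr hp0)).sub
      ((continuous_const.add continuous_id).rpow_const fun x => Or.inr hp0)
  have hmono : MonotoneOn g (Set.Ici 0) := by
    apply monotoneOn_of_deriv_nonneg (convex_Ici 0) hcont
    · exact fun x hx => ((hderiv x hx).differentiableAt).differentiableWithinAt
    · intro x hx
      rw [(hderiv x hx).deriv]
      rw [interior_Ici] at hx
      have hB := lemB (p := p - 1) (by linarith) (by linarith) ha x hx.le
      have he : p - 1 - 1 = p - 2 := by ring
      have he2 : p - 1 - 2 = p - 3 := by ring
      rw [he, he2] at hB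
      nlinarith [hB]
  intro b hb
  have h0 : g 0 = 0 := by simp [hg, Real.zero_rpow (by positivity : p ≠ 0)]
  have := hmono (Set.self_mem_Ici) (Set.mem_Ici.2 hb) hb
  rw [h0] at this
  simp only [hg] at this
  linarith

lemma lemD {p : ℝ} (hp1 : 2 < p) (hp2 : p ≤ 3) {a : ℝ} (ha : 0 ≤ a) :
    ∀ t : ℝ, 0 ≤ t → t ≤ a → (a - t) ^ p ≤ a ^ p - p * a ^ (p - 1) * t
      + p * (p - 1) / 2 * a ^ (p - 2) * t ^ 2 + t ^ p := by
  have hp0 : (0:ℝ) ≤ p := by linarith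
  set g : ℝ → ℝ := fun t => a ^ p - p * a ^ (p - 1) * t
      + p * (p - 1) / 2 * a ^ (p - 2) * t ^ 2 + t ^ p - (a - t) ^ p with hg
  have hderiv : ∀ x ∈ interior (Set.Icc (0:ℝ) a),
      HasDerivAt g (-(p * a ^ (p-1)) + p * (p-1) * a ^ (p-2) * x
        + p * x ^ (p-1) + p * (a-x) ^ (p-1)) x := by
    intro x hx
    rw [interior_Icc] at hx
    obtain ⟨hx0, hxa⟩ := hx
    have h1 : HasDerivAt (fun t : ℝ => t ^ p) (p * x ^ (p-1)) x :=
      Real.hasDerivAt_rpow_const (Or.inl hx0.ne')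
    have h2 : HasDerivAt (fun t : ℝ => (a - t) ^ p) ((-1) * p * (a-x) ^ (p-1)) x := by
      have hne : a - x ≠ 0 := by intro h; linarith [sub_eq_zero.1 h]
      have := ((hasDerivAt_id x).const_sub a).rpow_const (p := p) (Or.inl hne)
      simpa using this
    have h3 : HasDerivAt (fun t : ℝ => a ^ p - p * a ^ (p-1) * t) (-(p * a ^ (p-1) * 1)) x :=
      (((hasDerivAt_id x).const_mul (p * a ^ (p-1)))).const_sub (a ^ p)
    have h4 : HasDerivAt (fun t : ℝ => p * (p-1) / 2 * a ^ (p-2) * t ^ 2)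
        (p * (p-1) / 2 * a ^ (p-2) * (2 * x ^ 1)) x :=
      (hasDerivAt_pow 2 x).const_mul _
    have := ((h3.add h4).add h1).sub h2
    exact this.congr_deriv (by ring)
  have hcont : ContinuousOn g (Set.Icc 0 a) := by
    apply Continuous.continuousOn
    exact (((continuous_const.sub (continuous_const.mul continuous_id)).add
      (continuous_const.mul (continuous_pow 2))).add
      (continuous_id.rpow_const fun x => Or.inr hp0)).sub
      ((continuous_const.sub continuous_id).rpow_const fun x => Or.inr hp0)
  have hmono : MonotoneOn g (Set.Icc 0 a) := by
    apply monotoneOn_of_deriv_nonneg (convex_Icc 0 a) hcont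
    · exact fun x hx => ((hderiv x hx).differentiableAt).differentiableWithinAt
    · intro x hx
      rw [(hderiv x hx).deriv]
      rw [interior_Icc] at hx
      obtain ⟨hx0, hxa⟩ := hx
      have hax : (0:ℝ) ≤ a - x := by linarith
      have hA := lemA (q := p - 1) (by linarith) (by linarith) hax x hx0.le
      rw [sub_add_cancel] at hA
      have he : p - 1 - 1 = p - 2 := by ring
      rw [he] at hA
      have hle : (a - x) ^ (p-2) ≤ a ^ (p-2) :=
        Real.rpow_le_rpow hax (by linarith) (by linarith)
      have h5 : (p-1) * (a-x) ^ (p-2) * x ≤ (p-1) * a ^ (p-2) * x :=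
        mul_le_mul_of_nonneg_right (mul_le_mul_of_nonneg_left hle (by linarith)) hx0.le
      have h6 : a ^ (p-1) ≤ (a-x) ^ (p-1) + (p-1) * a ^ (p-2) * x + x ^ (p-1) := by
        linarith
      have h7 := mul_le_mul_of_nonneg_left h6 (by linarith : (0:ℝ) ≤ p)
      nlinarith [h7]
  intro t ht hta
  have h0 : g 0 = 0 := by simp [hg, Real.zero_rpow (by positivity : p ≠ 0)]
  have := hmono (Set.left_mem_Icc.2 ha) (Set.mem_Icc.2 ⟨ht, hta⟩) ht
  rw [h0] at this
  simp only [hg] at this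
  linarith

lemma lemE {p : ℝ} (hp1 : 3 < p) (hp2 : p ≤ 4) {a : ℝ} (ha : 0 ≤ a) :
    ∀ t : ℝ, 0 ≤ t → t ≤ a → (a - t) ^ p ≤ a ^ p - p * a ^ (p - 1) * t
      + p * (p - 1) / 2 * a ^ (p - 2) * t ^ 2
      + p * (p - 1) * (p - 2) / 6 * a ^ (p - 3) * t ^ 3 + t ^ p := by
  have hp0 : (0:ℝ) ≤ p := by linarith
  set g : ℝ → ℝ := fun t => a ^ p - p * a ^ (p - 1) * t
      + p * (p - 1) / 2 * a ^ (p - 2) * t ^ 2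
      + p * (p - 1) * (p - 2) / 6 * a ^ (p - 3) * t ^ 3 + t ^ p - (a - t) ^ p with hg
  have hderiv : ∀ x ∈ interior (Set.Icc (0:ℝ) a),
      HasDerivAt g (-(p * a ^ (p-1)) + p * (p-1) * a ^ (p-2) * x
        + p * (p-1) * (p-2) / 2 * a ^ (p-3) * x ^ 2
        + p * x ^ (p-1) + p * (a-x) ^ (p-1)) x := by
    intro x hx
    rw [interior_Icc] at hx
    obtain ⟨hx0, hxa⟩ := hx
    have h1 : HasDerivAt (fun t : ℝ => t ^ p) (p * x ^ (p-1)) x :=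
      Real.hasDerivAt_rpow_const (Or.inl hx0.ne')
    have h2 : HasDerivAt (fun t : ℝ => (a - t) ^ p) ((-1) * p * (a-x) ^ (p-1)) x := by
      have hne : a - x ≠ 0 := by intro h; linarith [sub_eq_zero.1 h]
      have := ((hasDerivAt_id x).const_sub a).rpow_const (p := p) (Or.inl hne)
      simpa using this
    have h3 : HasDerivAt (fun t : ℝ => a ^ p - p * a ^ (p-1) * t) (-(p * a ^ (p-1) * 1)) x :=
      (((hasDerivAt_id x).const_mul (p * a ^ (p-1)))).const_sub (a ^ p)
    have h4 : HasDerivAt (fun t : ℝ => p * (p-1) / 2 * a ^ (p-2) * t ^ 2)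
        (p * (p-1) / 2 * a ^ (p-2) * (2 * x ^ 1)) x :=
      (hasDerivAt_pow 2 x).const_mul _
    have h5 : HasDerivAt (fun t : ℝ => p * (p-1) * (p-2) / 6 * a ^ (p-3) * t ^ 3)
        (p * (p-1) * (p-2) / 6 * a ^ (p-3) * (3 * x ^ 2)) x :=
      (hasDerivAt_pow 3 x).const_mul _
    have := (((h3.add h4).add h5).add h1).sub h2
    exact this.congr_deriv (by ring)
  have hcont : ContinuousOn g (Set.Icc 0 a) := by
    apply Continuous.continuousOn
    exact ((((continuous_const.sub (continuous_const.mul continuous_id)).add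
      (continuous_const.mul (continuous_pow 2))).add
      (continuous_const.mul (continuous_pow 3))).add
      (continuous_id.rpow_const fun x => Or.inr hp0)).sub
      ((continuous_const.sub continuous_id).rpow_const fun x => Or.inr hp0)
  have hmono : MonotoneOn g (Set.Icc 0 a) := by
    apply monotoneOn_of_deriv_nonneg (convex_Icc 0 a) hcont
    · exact fun x hx => ((hderiv x hx).differentiableAt).differentiableWithinAt
    · intro x hx
      rw [(hderiv x hx).deriv]
      rw [interior_Icc] at hx
      obtain ⟨hx0, hxa⟩ := hx
      have hax : (0:ℝ) ≤ a - x := by linarith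
      have hB := lemB (p := p - 1) (by linarith) (by linarith) hax x hx0.le
      rw [sub_add_cancel] at hB
      have he : p - 1 - 1 = p - 2 := by ring
      have he2 : p - 1 - 2 = p - 3 := by ring
      rw [he, he2] at hB
      have hle : (a - x) ^ (p-2) ≤ a ^ (p-2) :=
        Real.rpow_le_rpow hax (by linarith) (by linarith)
      have hle2 : (a - x) ^ (p-3) ≤ a ^ (p-3) :=
        Real.rpow_le_rpow hax (by linarith) (by linarith)
      have h5 : (p-1) * (a-x) ^ (p-2) * x ≤ (p-1) * a ^ (p-2) * x :=
        mul_le_mul_of_nonneg_right (mul_le_mul_of_nonneg_left hle (by linarith)) hx0.le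
      have h5' : (p-1) * (p-2) / 2 * (a-x) ^ (p-3) * x ^ 2
          ≤ (p-1) * (p-2) / 2 * a ^ (p-3) * x ^ 2 :=
        mul_le_mul_of_nonneg_right
          (mul_le_mul_of_nonneg_left hle2 (by nlinarith)) (sq_nonneg x)
      have h6 : a ^ (p-1) ≤ (a-x) ^ (p-1) + (p-1) * a ^ (p-2) * x
          + (p-1) * (p-2) / 2 * a ^ (p-3) * x ^ 2 + x ^ (p-1) := by
        linarith
      have h7 := mul_le_mul_of_nonneg_left h6 (by linarith : (0:ℝ) ≤ p)
      nlinarith [h7]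
  intro t ht hta
  have h0 : g 0 = 0 := by simp [hg, Real.zero_rpow (by positivity : p ≠ 0)]
  have := hmono (Set.left_mem_Icc.2 ha) (Set.mem_Icc.2 ⟨ht, hta⟩) ht
  rw [h0] at this
  simp only [hg] at this
  linarith

end Aux

theorem stmt_18 (p : ℝ) (hp1 : 2 < p) (hp2 : p ≤ 4) (u r : ℝ)
    (hu : 0 ≤ u) (hur : 0 ≤ u + r) :
    (u + r) ^ p ≤
      u ^ p + p * u ^ (p - 1) * r + (p / 2) * (p - 1) * u ^ (p - 2) * r ^ 2
        -- the sum over natural numbers k with 2 < k < p (here k can only be 3)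
        + (∑ k ∈ Finset.Ioo (2 : ℕ) 4, if (k : ℝ) < p then
            Real.Gamma (p + 1) / (Real.Gamma ((k : ℝ) + 1) * Real.Gamma (p - k + 1))
              * u ^ (p - k) * |r| ^ (k : ℝ)
          else 0)
        + |r| ^ p := by
  have hIoo : Finset.Ioo (2 : ℕ) 4 = {3} := by decide
  rw [hIoo, Finset.sum_singleton]
  push_cast
  rcases le_or_gt p 3 with hp3 | hp3
  · rw [if_neg (by linarith : ¬ (3:ℝ) < p)]
    rcases le_or_gt 0 r with hr | hr
    · have h := lemB hp1 hp3 hu r hr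
      rw [abs_of_nonneg hr]
      linarith
    · have h := lemD hp1 hp3 hu (-r) (by linarith) (by linarith)
      rw [abs_of_neg hr]
      have e1 : u - -r = u + r := by ring
      have e2 : (-r) ^ 2 = r ^ 2 := by ring
      have e3 : p * u ^ (p-1) * (-r) = -(p * u ^ (p-1) * r) := by ring
      rw [e1, e2, e3] at h
      linarith
  · rw [if_pos hp3]
    -- compute the Gamma coefficient
    have hg1 : Real.Gamma (p + 1) = p * (p-1) * (p-2) * Real.Gamma (p - 2) := by
      have a1 : Real.Gamma (p + 1) = p * Real.Gamma p :=
        Real.Gamma_add_one (by positivity)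
      have a2 : Real.Gamma p = (p-1) * Real.Gamma (p-1) := by
        have h := Real.Gamma_add_one (s := p - 1)
          (by intro h; rw [sub_eq_zero] at h; linarith)
        rwa [show p - 1 + 1 = p by ring] at h
      have a3 : Real.Gamma (p-1) = (p-2) * Real.Gamma (p-2) := by
        have h := Real.Gamma_add_one (s := p - 2)
          (by intro h; rw [sub_eq_zero] at h; linarith)
        rwa [show p - 2 + 1 = p - 1 by ring] at h
      rw [a1, a2, a3]; ring
    have g3 : Real.Gamma (3:ℝ) = 2 := by
      rw [show (3:ℝ) = 2 + 1 by norm_num, Real.Gamma_add_one two_ne_zero, Real.Gamma_two]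
      norm_num
    have hg4 : Real.Gamma ((3:ℝ) + 1) = 6 := by
      rw [Real.Gamma_add_one (by norm_num), g3]; norm_num
    have hgpos : 0 < Real.Gamma (p - 2) := Real.Gamma_pos_of_pos (by linarith)
    have e4 : p - (3:ℝ) + 1 = p - 2 := by ring
    have hcoef : Real.Gamma (p + 1) / (Real.Gamma ((3:ℝ) + 1) * Real.Gamma (p - (3:ℝ) + 1))
        = p * (p-1) * (p-2) / 6 := by
      rw [e4, hg1, hg4]
      field_simp
    rw [hcoef]
    have habs : |r| ^ ((3:ℕ):ℝ) = |r| ^ (3:ℕ) := Real.rpow_natCast _ 3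
    push_cast at habs
    rw [habs]
    rcases le_or_gt 0 r with hr | hr
    · have h := lemC hp3 hp2 hu r hr
      rw [abs_of_nonneg hr]
      linarith
    · have h := lemE hp3 hp2 hu (-r) (by linarith) (by linarith)
      rw [abs_of_neg hr]
      have e1 : u - -r = u + r := by ring
      have e2 : (-r) ^ 2 = r ^ 2 := by ring
      have e3 : p * u ^ (p-1) * (-r) = -(p * u ^ (p-1) * r) := by ring
      rw [e1, e2, e3] at h
      linarith
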